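/- Let F = Q_p (p odd). Suppose Y, Y+ϖ^{-l}, Z ∈ F with ν(Z) = j - c₂ for integers c₂/2 ≤ j < c₂, l = c₂ - j, and Z ≡ -Y - ϖ^{-l} mod p^{⌈j/2⌉+1-⌈c₂/2⌉}. Let β ∈ F with ν(β²) = -c₂. Then Z(Z - ϖ^{-j})/β² ≡ (Y+ϖ^{-l})(Y+ϖ^{-j}+ϖ^{-l})/β² mod p^{⌈c₁/2⌉-⌈i/2⌉-1}, for any integers i, c₁ with c₁ ≥ i > c₁/2, c₁ < c₂, and c₂ - j > c₁ - i. That is, substituting Z = -Y-ϖ^{-l} into the quadratic form Z(Z-ϖ^{-j})/β² incurs an error lying in p^{⌈c₁/2⌉-⌈i/2⌉-1}. -/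
import Mathlib


/-- The substitution step in Lemma 3.35: substituting `Z = -Y - ϖ^{-l}` into
the quadratic form `Z(Z-ϖ^{-j})/β²` incurs an error lying in
`𝔭^{⌈c₁/2⌉-⌈i/2⌉-1}`:
`Z(Z-ϖ^{-j})/β² ≡ (Y+ϖ^{-l})(Y+ϖ^{-j}+ϖ^{-l})/β² mod 𝔭^{⌈c₁/2⌉-⌈i/2⌉-1}`. -/
theorem stmt18 (p : ℕ) [Fact p.Prime] (hp : Odd p)
    (c₁ c₂ i j l : ℤ) (hc₁pos : 0 < c₁) (hcc : c₁ < c₂)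
    (hi1 : i ≤ c₁) (hi2 : c₁ < 2 * i)
    (hj1 : j < c₂) (hj2 : c₂ ≤ 2 * j)
    (hij : c₁ - i < c₂ - j) (hl : l = c₂ - j)
    (Y Z β : ℚ_[p]) (hβ0 : β ≠ 0) (hβv : (β ^ 2).valuation = -c₂)
    (hZ0 : Z ≠ 0) (hZv : Z.valuation = j - c₂)
    (hcong : ‖Z - (-Y - (p : ℚ_[p]) ^ (-l))‖ ≤
      (p : ℝ) ^ (-((j + 1) / 2 + 1 - (c₂ + 1) / 2))) :
    ‖Z * (Z - (p : ℚ_[p]) ^ (-j)) / β ^ 2 -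
        (Y + (p : ℚ_[p]) ^ (-l)) * (Y + (p : ℚ_[p]) ^ (-j) + (p : ℚ_[p]) ^ (-l)) / β ^ 2‖ ≤
      (p : ℝ) ^ (-((c₁ + 1) / 2 - (i + 1) / 2 - 1)) := by
  have hp1 : (1:ℝ) < (p:ℝ) := by exact_mod_cast (Fact.out : p.Prime).one_lt
  have hp0 : (0:ℝ) < (p:ℝ) := lt_trans one_pos hp1
  set m : ℤ := (j + 1) / 2 + 1 - (c₂ + 1) / 2 with hm
  set n : ℤ := (c₁ + 1) / 2 - (i + 1) / 2 - 1 with hn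
  set πj : ℚ_[p] := (p : ℚ_[p]) ^ (-j) with hπj
  set πl : ℚ_[p] := (p : ℚ_[p]) ^ (-l) with hπl
  set E : ℚ_[p] := Z - (-Y - πl) with hE
  have hβ2 : ‖β ^ 2‖ = (p:ℝ) ^ (c₂ : ℤ) := by
    rw [Padic.norm_eq_zpow_neg_valuation (pow_ne_zero 2 hβ0), hβv, neg_neg]
  have hβ2ne : β ^ 2 ≠ 0 := pow_ne_zero 2 hβ0
  have hid : Z * (Z - πj) / β ^ 2 - (Y + πl) * (Y + πj + πl) / β ^ 2
      = (E * (2 * Z - πj) - E * E) / β ^ 2 := by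
    rw [div_sub_div_same]; congr 1; rw [hE]; ring
  have hZn : ‖Z‖ = (p:ℝ) ^ (c₂ - j) := by
    rw [Padic.norm_eq_zpow_neg_valuation hZ0, hZv]; ring_nf
  have hπjn : ‖πj‖ = (p:ℝ) ^ j := by
    rw [hπj, norm_zpow, Padic.norm_p, inv_zpow, ← zpow_neg, neg_neg]
  have hEn : ‖E‖ ≤ (p:ℝ) ^ (-m) := hcong
  have hsub : ∀ a b : ℚ_[p], ‖a - b‖ ≤ max ‖a‖ ‖b‖ := fun a b => by
    simpa [sub_eq_add_neg] using Padic.nonarchimedean a (-b)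
  have h2 : ‖(2:ℚ_[p])‖ ≤ 1 := by
    have := Padic.norm_int_le_one (p := p) 2
    simpa using this
  have h2Z : ‖2 * Z - πj‖ ≤ (p:ℝ) ^ j := by
    refine le_trans (hsub _ _) (max_le ?_ (le_of_eq hπjn))
    rw [norm_mul, hZn]
    calc ‖(2:ℚ_[p])‖ * (p:ℝ) ^ (c₂ - j) ≤ 1 * (p:ℝ) ^ (c₂ - j) := by
          exact mul_le_mul_of_nonneg_right h2 (le_of_lt (zpow_pos hp0 _))
      _ = (p:ℝ) ^ (c₂ - j) := one_mul _
      _ ≤ (p:ℝ) ^ j := zpow_le_zpow_right₀ hp1.le (by omega)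
  rw [hid, norm_div, hβ2, div_le_iff₀ (zpow_pos hp0 _), ← zpow_add₀ (ne_of_gt hp0)]
  refine le_trans (hsub _ _) (max_le ?_ ?_)
  · rw [norm_mul]
    calc ‖E‖ * ‖2 * Z - πj‖ ≤ (p:ℝ) ^ (-m) * (p:ℝ) ^ j := by
          exact mul_le_mul hEn h2Z (norm_nonneg _) (le_of_lt (zpow_pos hp0 _))
      _ = (p:ℝ) ^ (-m + j) := (zpow_add₀ (ne_of_gt hp0) _ _).symm
      _ ≤ (p:ℝ) ^ (-n + c₂) := zpow_le_zpow_right₀ hp1.le (by omega)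
  · rw [norm_mul]
    calc ‖E‖ * ‖E‖ ≤ (p:ℝ) ^ (-m) * (p:ℝ) ^ (-m) := by
          exact mul_le_mul hEn hEn (norm_nonneg _) (le_of_lt (zpow_pos hp0 _))
      _ = (p:ℝ) ^ (-m + -m) := (zpow_add₀ (ne_of_gt hp0) _ _).symm
      _ ≤ (p:ℝ) ^ (-n + c₂) := zpow_le_zpow_right₀ hp1.le (by omega)
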